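/- Two null metric hypersurface data {N,γ₁,ℓ₁,ℓ⁽²⁾₁} and {N,γ₂,ℓ₂,ℓ⁽²⁾₂} on the same manifold N are related by a gauge transformation if and only if γ₁ = γ₂. -/

import Mathlib

open Module LinearMap

variable {N : Type*} {T : N → Type*} [∀ p, AddCommGroup (T p)] [∀ p, Module ℝ (T p)]
  [∀ p, FiniteDimensional ℝ (T p)]

/-- The symmetric bilinear form `A` on `T ⊕ ℝ` associated to `(γ, ℓ, ℓ⁽²⁾)`. -/
def Aform {V : Type*} [AddCommGroup V] [Module ℝ V]
    (γ : V →ₗ[ℝ] V →ₗ[ℝ] ℝ) (ℓ : Dual ℝ V) (l2 : ℝ) (v w : V × ℝ) : ℝ :=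
  γ v.1 w.1 + v.2 * ℓ w.1 + w.2 * ℓ v.1 + v.2 * w.2 * l2

/-- Gauge action on the covector field: `G_{(z,ζ)}(ℓ) = z(ℓ + γ(ζ,·))`. -/
noncomputable def gaugeL (γ : ∀ p, T p →ₗ[ℝ] T p →ₗ[ℝ] ℝ) (z : N → ℝ) (ζ : ∀ p, T p)
    (ℓ : ∀ p, Dual ℝ (T p)) : ∀ p, Dual ℝ (T p) :=
  fun p ↦ z p • (ℓ p + γ p (ζ p))

/-- Gauge action on the scalar field: `G_{(z,ζ)}(ℓ⁽²⁾) = z²(ℓ⁽²⁾ + 2ℓ(ζ) + γ(ζ,ζ))`. -/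
noncomputable def gaugeL2 (γ : ∀ p, T p →ₗ[ℝ] T p →ₗ[ℝ] ℝ) (z : N → ℝ) (ζ : ∀ p, T p)
    (ℓ : ∀ p, Dual ℝ (T p)) (l2 : N → ℝ) : N → ℝ :=
  fun p ↦ (z p) ^ 2 * (l2 p + 2 * ℓ p (ζ p) + γ p (ζ p) (ζ p))

/-- If `ℓ` vanishes on a nonzero radical element `n`, then `(n,0)` is `A`-degenerate;
hence nondegeneracy of `A` forces `ℓ(n) ≠ 0`. -/
lemma ell_ne_zero_of_nondeg {V : Type*} [AddCommGroup V] [Module ℝ V]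
    (γ : V →ₗ[ℝ] V →ₗ[ℝ] ℝ) (ℓ : Dual ℝ V) (a : ℝ)
    (hA : ∀ v : V × ℝ, (∀ w : V × ℝ, Aform γ ℓ a v w = 0) → v = 0)
    {n : V} (hn : n ∈ LinearMap.ker γ) (hn0 : n ≠ 0) : ℓ n ≠ 0 := by
  intro h0
  have hker : γ n = 0 := hn
  have : (n, (0 : ℝ)) = 0 := by
    apply hA
    intro w
    simp [Aform, hker, h0]
  exact hn0 (congrArg Prod.fst this)

/-- The range of a symmetric bilinear map (viewed as `V →ₗ Dual V`) is exactly the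
annihilator of its kernel, in finite dimensions. -/
lemma range_eq_dualAnnihilator_ker {V : Type*} [AddCommGroup V] [Module ℝ V]
    [FiniteDimensional ℝ V] (γ : V →ₗ[ℝ] V →ₗ[ℝ] ℝ)
    (hsym : ∀ x y, γ x y = γ y x) :
    LinearMap.range γ = (LinearMap.ker γ).dualAnnihilator := by
  apply Submodule.eq_of_le_of_finrank_eq
  · rintro φ ⟨ζ, rfl⟩
    rw [Submodule.mem_dualAnnihilator]
    intro x hx
    have : γ x = 0 := hx
    rw [hsym ζ x, this]
    rfl
  · have h1 : finrank ℝ (LinearMap.range γ) + finrank ℝ (LinearMap.ker γ) = finrank ℝ V :=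
      LinearMap.finrank_range_add_finrank_ker γ
    have h2 : finrank ℝ ((LinearMap.ker γ).dualAnnihilator) =
        finrank ℝ (V ⧸ (LinearMap.ker γ)) :=
      (LinearEquiv.finrank_eq (Subspace.quotEquivAnnihilator (LinearMap.ker γ))).symm
    have h3 : finrank ℝ (V ⧸ (LinearMap.ker γ)) + finrank ℝ (LinearMap.ker γ) =
        finrank ℝ V := Submodule.finrank_quotient_add_finrank _
    rw [h2]
    omega

/-- Pointwise gauge-fixing: given two null data with the same `γ`, there is a gauge
element relating them. -/
lemma pointwise_gauge {V : Type*} [AddCommGroup V] [Module ℝ V] [FiniteDimensional ℝ V]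
    (γ : V →ₗ[ℝ] V →ₗ[ℝ] ℝ) (ℓ₁ ℓ₂ : Dual ℝ V) (a b : ℝ)
    (hsym : ∀ x y, γ x y = γ y x)
    (hker : finrank ℝ (LinearMap.ker γ) = 1)
    (hA₁ : ∀ v : V × ℝ, (∀ w : V × ℝ, Aform γ ℓ₁ a v w = 0) → v = 0)
    (hA₂ : ∀ v : V × ℝ, (∀ w : V × ℝ, Aform γ ℓ₂ b v w = 0) → v = 0) :
    ∃ (z : ℝ) (ζ : V), z ≠ 0 ∧ z • (ℓ₁ + γ ζ) = ℓ₂ ∧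
      z ^ 2 * (a + 2 * ℓ₁ ζ + γ ζ ζ) = b := by
  -- a nonzero radical element
  have hbot : LinearMap.ker γ ≠ ⊥ := by
    intro h
    rw [h] at hker
    simp at hker
  obtain ⟨n, hn, hn0⟩ := Submodule.exists_mem_ne_zero_of_ne_bot hbot
  have hγn : γ n = 0 := hn
  have hl1 : ℓ₁ n ≠ 0 := ell_ne_zero_of_nondeg γ ℓ₁ a hA₁ hn hn0
  have hl2 : ℓ₂ n ≠ 0 := ell_ne_zero_of_nondeg γ ℓ₂ b hA₂ hn hn0
  set z : ℝ := ℓ₂ n / ℓ₁ n with hz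
  have hz0 : z ≠ 0 := div_ne_zero hl2 hl1
  -- the kernel is spanned by n
  have hspan : LinearMap.ker γ = ℝ ∙ n := by
    symm
    apply Submodule.eq_of_le_of_finrank_eq
    · rwa [Submodule.span_singleton_le_iff_mem]
    · rw [finrank_span_singleton hn0, hker]
  -- ω vanishes on the kernel
  set ω : Dual ℝ V := z⁻¹ • ℓ₂ - ℓ₁ with hω
  have hωn : ω n = 0 := by
    simp only [hω, LinearMap.sub_apply, LinearMap.smul_apply, smul_eq_mul, hz]
    field_simp
    ring
  have hωann : ω ∈ (LinearMap.ker γ).dualAnnihilator := by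
    rw [Submodule.mem_dualAnnihilator]
    intro x hx
    rw [hspan, Submodule.mem_span_singleton] at hx
    obtain ⟨c, rfl⟩ := hx
    simp [hωn]
  rw [← range_eq_dualAnnihilator_ker γ hsym] at hωann
  obtain ⟨ζ₀, hζ₀⟩ := hωann
  -- adjust along n to fix the scalar
  obtain ⟨t, ht⟩ : ∃ t : ℝ, 2 * (t * ℓ₁ n) = b / z ^ 2 - (a + 2 * ℓ₁ ζ₀ + γ ζ₀ ζ₀) := by
    refine ⟨(b / z ^ 2 - (a + 2 * ℓ₁ ζ₀ + γ ζ₀ ζ₀)) / (2 * ℓ₁ n), ?_⟩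
    have hln2 : 2 * ℓ₁ n ≠ 0 := mul_ne_zero two_ne_zero hl1
    field_simp
  refine ⟨z, ζ₀ + t • n, hz0, ?_, ?_⟩
  · have hγζ : γ (ζ₀ + t • n) = ω := by
      rw [map_add, map_smul, hγn, smul_zero, add_zero, hζ₀]
    rw [hγζ, hω]
    ext x
    simp only [LinearMap.smul_apply, LinearMap.add_apply, LinearMap.sub_apply,
      smul_eq_mul]
    field_simp
    ring
  · have hγζ : γ (ζ₀ + t • n) = ω := by
      rw [map_add, map_smul, hγn, smul_zero, add_zero, hζ₀]
    have h1 : ℓ₁ (ζ₀ + t • n) = ℓ₁ ζ₀ + t * ℓ₁ n := by simp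
    have h2 : γ (ζ₀ + t • n) (ζ₀ + t • n) = γ ζ₀ ζ₀ := by
      rw [hγζ, map_add, map_smul, hωn, smul_zero, add_zero, ← hζ₀]
    rw [h1, h2]
    have hfin : a + 2 * (ℓ₁ ζ₀ + t * ℓ₁ n) + γ ζ₀ ζ₀ = b / z ^ 2 := by linarith
    rw [hfin]
    field_simp

/-- Two null metric hypersurface data `{N,γ₁,ℓ₁,ℓ⁽²⁾₁}` and `{N,γ₂,ℓ₂,ℓ⁽²⁾₂}` on the same
manifold `N` are related by a gauge transformation if and only if `γ₁ = γ₂`. -/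
theorem gauge_equivalent_iff_same_gamma
    (γ₁ γ₂ : ∀ p, T p →ₗ[ℝ] T p →ₗ[ℝ] ℝ)
    (ℓ₁ ℓ₂ : ∀ p, Dual ℝ (T p)) (l2₁ l2₂ : N → ℝ)
    (hγ₁sym : ∀ p (x y : T p), γ₁ p x y = γ₁ p y x)
    (hγ₂sym : ∀ p (x y : T p), γ₂ p x y = γ₂ p y x)
    (hrad₁ : ∀ p, Module.finrank ℝ (LinearMap.ker (γ₁ p)) = 1)
    (hrad₂ : ∀ p, Module.finrank ℝ (LinearMap.ker (γ₂ p)) = 1)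
    (hA₁ : ∀ p, ∀ v : T p × ℝ,
      (∀ w : T p × ℝ, Aform (γ₁ p) (ℓ₁ p) (l2₁ p) v w = 0) → v = 0)
    (hA₂ : ∀ p, ∀ v : T p × ℝ,
      (∀ w : T p × ℝ, Aform (γ₂ p) (ℓ₂ p) (l2₂ p) v w = 0) → v = 0) :
    (∃ (z : N → ℝ) (ζ : ∀ p, T p), (∀ p, z p ≠ 0) ∧
        γ₁ = γ₂ ∧ gaugeL γ₁ z ζ ℓ₁ = ℓ₂ ∧ gaugeL2 γ₁ z ζ ℓ₁ l2₁ = l2₂) ↔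
      γ₁ = γ₂ := by
  constructor
  · rintro ⟨z, ζ, hz, hγ, -, -⟩
    exact hγ
  · intro hγ
    subst hγ
    have key : ∀ p, ∃ (z : ℝ) (ζ : T p), z ≠ 0 ∧ z • (ℓ₁ p + γ₁ p ζ) = ℓ₂ p ∧
        z ^ 2 * (l2₁ p + 2 * ℓ₁ p ζ + γ₁ p ζ ζ) = l2₂ p := fun p ↦
      pointwise_gauge (γ₁ p) (ℓ₁ p) (ℓ₂ p) (l2₁ p) (l2₂ p) (hγ₁sym p) (hrad₁ p)
        (hA₁ p) (hA₂ p)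
    choose z ζ hz h1 h2 using key
    exact ⟨z, ζ, hz, rfl, funext h1, funext h2⟩
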